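/- arXiv:2111.13561 — 5 statements merged into one kernel-verified Lean document; each statement's English description precedes it below -/
import Mathlib

section
/- Let A be an inverse automaton over an alphabet A (deterministic, involutive, trim, with partial transition function δ) with finite state set Q which is not complete. Then there exists a word w over the alphabet Ã = A ∪ A⁻¹ such that w cannot be read from any state of A, i.e., the partial transformation δ_w is the empty transformation. -/
/-- Reading a word over `Ã = A × Bool` (letter `(a, true)` is `a`, `(a, false)` is `a⁻¹`)
from a state of a partial deterministic automaton. -/
def readWord {Q A : Type} (δ : Q → A × Bool → Option Q) : Q → List (A × Bool) → Option Q
  | q, [] => some q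
  | q, x :: w =>
    match δ q x with
    | none => none
    | some q' => readWord δ q' w

theorem readWord_append {Q A : Type} (δ : Q → A × Bool → Option Q) (q : Q)
    (w w' : List (A × Bool)) :
    readWord δ q (w ++ w') = (readWord δ q w).bind (fun p => readWord δ p w') := by
  induction w generalizing q with
  | nil => simp [readWord]
  | cons x t ih =>
    simp only [List.cons_append, readWord]
    cases δ q x with
    | none => rfl
    | some p => exact ih p

/-- A finite inverse automaton (involutive, deterministic, trim) that is not
complete admits a word over `Ã` that cannot be read from any state. -/
theorem stmt_4 {A Q : Type} [Fintype Q] (δ : Q → A × Bool → Option Q)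
    (hinv : ∀ (p q : Q) (a : A) (b : Bool), δ p (a, b) = some q ↔ δ q (a, !b) = some p)
    (htrim : ∀ p q : Q, ∃ w : List (A × Bool), readWord δ p w = some q)
    (hincomplete : ∃ (q : Q) (x : A × Bool), δ q x = none) :
    ∃ w : List (A × Bool), ∀ q : Q, readWord δ q w = none := by
  obtain ⟨q₀, x₀, hx₀⟩ := hincomplete
  have key : ∀ L : List Q, ∃ w : List (A × Bool), ∀ q ∈ L, readWord δ q w = none := by
    intro L
    induction L with
    | nil => exact ⟨[], by simp⟩
    | cons q t ih =>
      obtain ⟨w, hw⟩ := ih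
      cases h : readWord δ q w with
      | none =>
        refine ⟨w, ?_⟩
        intro q' hq'
        rcases List.mem_cons.mp hq' with rfl | hq'
        · exact h
        · exact hw q' hq'
      | some p =>
        obtain ⟨u, hu⟩ := htrim p q₀
        refine ⟨w ++ (u ++ [x₀]), ?_⟩
        have hkill : readWord δ p (u ++ [x₀]) = none := by
          rw [readWord_append, hu]
          simp [readWord, hx₀]
        intro q' hq'
        rw [readWord_append]
        rcases List.mem_cons.mp hq' with rfl | hq'
        · rw [h]; exact hkill
        · rw [hw q' hq']; rfl
  obtain ⟨w, hw⟩ := key Finset.univ.toList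
  exact ⟨w, fun q => hw q (by simp)⟩
end

section
/- Let K be a finite-index subgroup of the free group F_A with complete Stallings automaton S(K) = (Q, A, δ, q₀), and let (u_n)_n be a sequence of elements of a free group F_X on variables X. Then the transition group M(K) ultimately satisfies the identities u_n = 1 if and only if there exists p ≥ 1 such that for every group homomorphism ψ : F_X → F_A and all n ≥ p, u_n ψ belongs to K. -/
/-- Let `K ≤ F_A` be of finite index, with complete Stallings automaton
modelled by the transitive action `Δ : F_A →* Perm Q` whose stabilizer of the basepoint
`q₀` is `K`; the transition group `M(K)` is `Δ.range`. For a sequence `(u n)` in a free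
group `F_X`, `M(K)` ultimately satisfies the identities `u n = 1` iff there is `p ≥ 1`
such that for every homomorphism `ψ : F_X →* F_A` and all `n ≥ p`, `ψ (u n) ∈ K`. -/
theorem stmt_7 {A X Q : Type} [Fintype Q] (K : Subgroup (FreeGroup A))
    (Δ : FreeGroup A →* Equiv.Perm Q) (q₀ : Q)
    (hconn : ∀ q : Q, ∃ g : FreeGroup A, Δ g q₀ = q)
    (hK : ∀ g : FreeGroup A, g ∈ K ↔ Δ g q₀ = q₀)
    (u : ℕ → FreeGroup X) :
    (∃ p : ℕ, 1 ≤ p ∧ ∀ n, p ≤ n → ∀ φ : FreeGroup X →* Δ.range, φ (u n) = 1) ↔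
    (∃ p : ℕ, 1 ≤ p ∧ ∀ ψ : FreeGroup X →* FreeGroup A, ∀ n, p ≤ n → ψ (u n) ∈ K) := by
  constructor
  · rintro ⟨p, hp1, hp⟩
    refine ⟨p, hp1, fun ψ n hn => ?_⟩
    have h := hp n hn (Δ.rangeRestrict.comp ψ)
    have h1 : Δ (ψ (u n)) = 1 := congrArg Subtype.val h
    rw [hK, h1]
    rfl
  · rintro ⟨p, hp1, hp⟩
    refine ⟨p, hp1, fun n hn φ => ?_⟩
    have hpre : ∀ x : X, ∃ g : FreeGroup A, Δ g = (φ (FreeGroup.of x) : Equiv.Perm Q) :=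
      fun x => (φ (FreeGroup.of x)).2
    choose f hf using hpre
    set ψ := FreeGroup.lift f with hψ
    have hcomm : Δ (ψ (u n)) = (φ (u n) : Equiv.Perm Q) := by
      have hc : Δ.comp ψ = Δ.range.subtype.comp φ := by
        apply FreeGroup.ext_hom
        intro x
        simp [hψ, hf x]
      simpa using DFunLike.congr_fun hc (u n)
    have key : Δ (ψ (u n)) = 1 := by
      ext q
      obtain ⟨g, hg⟩ := hconn q
      have hmem := hp (((MulAut.conj g⁻¹).toMonoidHom.comp ψ)) n hn
      rw [hK] at hmem
      simp only [MonoidHom.comp_apply, MulAut.conj_apply, map_mul, map_inv] at hmem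
      have : Δ (ψ (u n)) (Δ g q₀) = Δ g q₀ := by
        have := congrArg (Δ g) hmem
        simpa [Equiv.Perm.mul_apply] using this
      simpa [hg] using this
    ext1
    rw [hcomm] at key
    exact key
end

section
/- Let p be a prime and K a finite-index subgroup of the free group F_A. Then the transition group M(K) of the Stallings automaton of K is a p-group if and only if there exists m ≥ 1 such that x^{p^m} ∈ K for all x ∈ F_A. -/
/-- Let `p` be a prime and `K ≤ F_A` of finite index, with complete
Stallings automaton modelled by the transitive action `Δ : F_A →* Perm Q` whose
stabilizer of the basepoint `q₀` is `K`; the transition group `M(K)` is `Δ.range`.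
Then `M(K)` is a `p`-group iff there is `m ≥ 1` with `x ^ (p ^ m) ∈ K` for all `x`. -/
theorem stmt_9 {A Q : Type} [Fintype Q] (p : ℕ) (hp : p.Prime)
    (K : Subgroup (FreeGroup A))
    (Δ : FreeGroup A →* Equiv.Perm Q) (q₀ : Q)
    (hconn : ∀ q : Q, ∃ g : FreeGroup A, Δ g q₀ = q)
    (hK : ∀ g : FreeGroup A, g ∈ K ↔ Δ g q₀ = q₀) :
    IsPGroup p Δ.range ↔ (∃ m : ℕ, 1 ≤ m ∧ ∀ x : FreeGroup A, x ^ p ^ m ∈ K) := by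
  haveI : Fact p.Prime := ⟨hp⟩
  haveI : Finite Q := Finite.of_fintype Q
  haveI : Fintype (Equiv.Perm Q) := Fintype.ofFinite _
  haveI : Fintype Δ.range := Fintype.ofFinite _
  constructor
  · intro h
    obtain ⟨n, hn⟩ := IsPGroup.iff_card.mp h
    refine ⟨n + 1, Nat.le_add_left 1 n, fun x => ?_⟩
    have h1 : (⟨Δ x, x, rfl⟩ : Δ.range) ^ Fintype.card Δ.range = 1 :=
      pow_card_eq_one
    rw [Nat.card_eq_fintype_card] at hn
    rw [hn] at h1
    have h2 : (⟨Δ x, x, rfl⟩ : Δ.range) ^ p ^ (n + 1) = 1 := by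
      rw [pow_succ, pow_mul, h1, one_pow]
    have hy : (Δ x) ^ p ^ (n + 1) = 1 := by
      have := congrArg Subtype.val h2
      simpa using this
    rw [hK, map_pow, hy]
    rfl
  · rintro ⟨m, hm, hx⟩
    rintro ⟨g, x, rfl⟩
    refine ⟨m, ?_⟩
    have hperm : (Δ x) ^ p ^ m = 1 := by
      rw [← map_pow]
      ext q
      obtain ⟨g, hg⟩ := hconn q
      have hk : (g⁻¹ * x * g) ^ p ^ m ∈ K := hx _
      have h0 : Δ ((g⁻¹ * x * g) ^ p ^ m) q₀ = q₀ := (hK _).mp hk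
      have hc : ∀ k : ℕ, (g⁻¹ * x * g) ^ k = g⁻¹ * x ^ k * g := by
        intro k
        induction k with
        | zero => simp
        | succ k ih => rw [pow_succ, pow_succ, ih]; group
      have hrw : x ^ p ^ m * g = g * (g⁻¹ * x * g) ^ p ^ m := by
        rw [hc]; group
      calc (Δ (x ^ p ^ m)) q = (Δ (x ^ p ^ m)) ((Δ g) q₀) := by rw [hg]
        _ = (Δ (x ^ p ^ m * g)) q₀ := by rw [map_mul]; rfl
        _ = (Δ (g * (g⁻¹ * x * g) ^ p ^ m)) q₀ := by rw [hrw]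
        _ = (Δ g) (Δ ((g⁻¹ * x * g) ^ p ^ m) q₀) := by rw [map_mul]; rfl
        _ = (Δ g) q₀ := by rw [h0]
        _ = q := hg
    refine Subtype.ext ?_
    rw [SubgroupClass.coe_pow]
    exact hperm
end

section
/- Let K be a finitely generated subgroup of the free group F_A with Stallings automaton S(K) = (Q, A, δ, q₀), and let k ≥ 1. The following are equivalent: (i) every subgroup (group H-class) of the transition monoid M(K) satisfies x^k = 1; (ii) for all q ∈ Q, all words v over Ã, and all n ≥ 1, if v^n labels a loop at q then v^{gcd(k,n)} labels a loop at q; (iii) for all x ∈ F_A and n ≥ 1, x^n ∈ K implies x^{gcd(k,n)} ∈ K. -/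
/-- The `n`-th power of a word. -/
def wpow {α : Type} (w : List α) (n : ℕ) : List α := (List.replicate n w).flatten

/-- Domain of the partial transformation `δ_w`. -/
def pdom {Q A : Type} (δ : Q → A × Bool → Option Q) (w : List (A × Bool)) : Set Q :=
  {q | (readWord δ q w).isSome}

/-- Image of the partial transformation `δ_w`. -/
def pim {Q A : Type} (δ : Q → A × Bool → Option Q) (w : List (A × Bool)) : Set Q :=
  {q | ∃ p, readWord δ p w = some q}

namespace Stmt10

set_option linter.unusedSectionVars false

variable {A Q : Type} [DecidableEq A] (δ : Q → A × Bool → Option Q)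

@[simp] theorem readWord_nil (q : Q) : readWord δ q [] = some q := rfl

theorem readWord_cons (q : Q) (x : A × Bool) (w : List (A × Bool)) :
    readWord δ q (x :: w) = (δ q x).bind (fun p => readWord δ p w) := by
  cases h : δ q x <;> simp [readWord, h]

theorem readWord_append (q : Q) (w₁ w₂ : List (A × Bool)) :
    readWord δ q (w₁ ++ w₂) = (readWord δ q w₁).bind (fun p => readWord δ p w₂) := by
  induction w₁ generalizing q with
  | nil => simp
  | cons x t ih =>
      rw [List.cons_append, readWord_cons, readWord_cons]
      cases δ q x with
      | none => rfl
      | some q' => exact ih q'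

@[simp] theorem wpow_zero {α : Type} (w : List α) : wpow w 0 = [] := rfl

theorem wpow_succ {α : Type} (w : List α) (n : ℕ) : wpow w (n + 1) = w ++ wpow w n := by
  simp [wpow, List.replicate_succ]

@[simp] theorem wpow_one {α : Type} (w : List α) : wpow w 1 = w := by
  have : wpow w (0 + 1) = w ++ wpow w 0 := wpow_succ w 0
  simpa using this

theorem wpow_add {α : Type} (w : List α) (m n : ℕ) :
    wpow w (m + n) = wpow w m ++ wpow w n := by
  unfold wpow; rw [List.replicate_add, List.flatten_append]

@[simp] theorem wpow_nil {α : Type} (n : ℕ) : wpow ([] : List α) n = [] := by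
  induction n with
  | zero => rfl
  | succ n ih => rw [wpow_succ, List.nil_append, ih]

theorem wpow_mul {α : Type} (w : List α) (m n : ℕ) :
    wpow w (m * n) = wpow (wpow w m) n := by
  induction n with
  | zero => simp
  | succ n ih => rw [Nat.mul_succ, wpow_add, ih, wpow_add, wpow_one]

theorem mk_wpow (w : List (A × Bool)) (n : ℕ) :
    FreeGroup.mk (wpow w n) = (FreeGroup.mk w) ^ n := by
  induction n with
  | zero => simp [FreeGroup.one_eq_mk]
  | succ n ih => rw [wpow_add, ← FreeGroup.mul_mk, ih, wpow_one, pow_succ]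

theorem loop_wpow {q : Q} {w : List (A × Bool)}
    (h : readWord δ q w = some q) (n : ℕ) : readWord δ q (wpow w n) = some q := by
  induction n with
  | zero => simp
  | succ n ih => rw [wpow_succ, readWord_append, h]; exact ih

theorem invRev_cons (x : A × Bool) (w : List (A × Bool)) :
    FreeGroup.invRev (x :: w) = FreeGroup.invRev w ++ [(x.1, !x.2)] := by
  simp [FreeGroup.invRev]

@[simp] theorem readWord_singleton (q : Q) (x : A × Bool) :
    readWord δ q [x] = δ q x := by
  rw [readWord_cons]; cases δ q x <;> rfl

theorem readWord_invRev
    (hinv : ∀ (p q : Q) (a : A) (b : Bool), δ p (a, b) = some q ↔ δ q (a, !b) = some p)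
    (w : List (A × Bool)) (p q : Q) :
    readWord δ q (FreeGroup.invRev w) = some p ↔ readWord δ p w = some q := by
  induction w generalizing p q with
  | nil => simp [FreeGroup.invRev, eq_comm]
  | cons x t ih =>
      obtain ⟨a, b⟩ := x
      rw [invRev_cons, readWord_append, readWord_cons]
      simp only [readWord_singleton, Option.bind_eq_some_iff]
      constructor
      · rintro ⟨r, hr, hx⟩
        have h2 : δ p (a, b) = some r := by
          have := (hinv r p a (!b)).mp hx; rwa [Bool.not_not] at this
        exact ⟨r, h2, (ih r q).mp hr⟩
      · rintro ⟨r, hr, ht⟩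
        exact ⟨r, (ih r q).mpr ht, (hinv p r a b).mp hr⟩

theorem readWord_inj
    (hinv : ∀ (p q : Q) (a : A) (b : Bool), δ p (a, b) = some q ↔ δ q (a, !b) = some p)
    {w : List (A × Bool)} {p₁ p₂ q : Q}
    (h₁ : readWord δ p₁ w = some q) (h₂ : readWord δ p₂ w = some q) : p₁ = p₂ := by
  have e₁ := (readWord_invRev δ hinv w p₁ q).mpr h₁
  have e₂ := (readWord_invRev δ hinv w p₂ q).mpr h₂
  rw [e₁] at e₂; exact Option.some_inj.mp e₂

theorem readWord_reduce
    (hinv : ∀ (p q : Q) (a : A) (b : Bool), δ p (a, b) = some q ↔ δ q (a, !b) = some p)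
    {w : List (A × Bool)} {p q : Q} (h : readWord δ p w = some q) :
    readWord δ p (FreeGroup.reduce w) = some q := by
  induction w generalizing p with
  | nil => simpa using h
  | cons x t ih =>
      obtain ⟨a, b⟩ := x
      rw [readWord_cons, Option.bind_eq_some_iff] at h
      obtain ⟨r, hr, ht⟩ := h
      have ih' := ih ht
      rw [FreeGroup.reduce.cons]
      cases hred : FreeGroup.reduce t with
      | nil =>
          rw [hred, readWord_nil] at ih'
          obtain rfl : r = q := Option.some_inj.mp ih'
          simpa using hr
      | cons y t2 =>
          rw [hred] at ih'
          obtain ⟨y1, y2⟩ := y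
          change readWord δ p
            (if a = y1 ∧ b = !y2 then t2 else (a, b) :: (y1, y2) :: t2) = some q
          by_cases hc : a = y1 ∧ b = !y2
          · rw [if_pos hc]
            rw [readWord_cons, Option.bind_eq_some_iff] at ih'
            obtain ⟨s, hs, ht2⟩ := ih'
            obtain ⟨h1, h2⟩ := hc
            have hy : (y1, y2) = (a, !b) := by
              simp only [Prod.mk.injEq]
              exact ⟨h1.symm, by rw [h2, Bool.not_not]⟩
            rw [hy] at hs
            have hp : δ r (a, !b) = some p := (hinv p r a b).mp hr
            obtain rfl : s = p := by rw [hs] at hp; exact Option.some_inj.mp hp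
            exact ht2
          · rw [if_neg hc]
            rw [readWord_cons, hr, Option.bind_some]
            exact ih'

def NC : (A × Bool) → (A × Bool) → Prop := fun a b => ¬(a.1 = b.1 ∧ a.2 = !b.2)

theorem reduce_eq_self_of_chain {w : List (A × Bool)} (h : List.Chain' NC w) :
    FreeGroup.reduce w = w := by
  induction w with
  | nil => rfl
  | cons x t ih =>
      have ht : List.Chain' NC t := h.tail
      rw [FreeGroup.reduce.cons, ih ht]
      cases t with
      | nil => rfl
      | cons y t2 =>
          have hxy : NC x y := List.isChain_cons_cons.mp h |>.1
          simp only [NC] at hxy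
          simp [hxy]

theorem chain_of_reduce_eq_self {w : List (A × Bool)} (h : FreeGroup.reduce w = w) :
    List.Chain' NC w := by
  induction w with
  | nil => exact List.isChain_nil
  | cons x t ih =>
      rw [FreeGroup.reduce.cons] at h
      cases hred : FreeGroup.reduce t with
      | nil =>
          rw [hred] at h
          obtain rfl : t = [] := by injection h with _ h2; exact h2.symm
          exact List.isChain_singleton x
      | cons y t2 =>
          rw [hred] at h
          change (if x.1 = y.1 ∧ x.2 = !y.2 then t2 else x :: y :: t2) = x :: t at h
          by_cases hc : x.1 = y.1 ∧ x.2 = !y.2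
          · exfalso
            rw [if_pos hc] at h
            have hlen : (FreeGroup.reduce t).length ≤ t.length :=
              FreeGroup.Red.length_le FreeGroup.reduce.red
            rw [hred] at hlen
            have := congrArg List.length h
            simp at hlen this
            omega
          · rw [if_neg hc] at h
            have ht : t = y :: t2 := by injection h with _ h2; exact h2.symm
            have hct : List.Chain' NC t := ih (by rw [hred, ht])
            rw [ht] at hct ⊢
            exact List.isChain_cons_cons.mpr ⟨hc, hct⟩

theorem reduce_eq_reduce_of_mk_eq {w₁ w₂ : List (A × Bool)}
    (h : FreeGroup.mk w₁ = FreeGroup.mk w₂) :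
    FreeGroup.reduce w₁ = FreeGroup.reduce w₂ := by
  rw [← FreeGroup.toWord_mk, ← FreeGroup.toWord_mk, h]

theorem readWord_congr
    (hinv : ∀ (p q : Q) (a : A) (b : Bool), δ p (a, b) = some q ↔ δ q (a, !b) = some p)
    {w₁ w₂ : List (A × Bool)} {p q₁ q₂ : Q}
    (hmk : FreeGroup.mk w₁ = FreeGroup.mk w₂)
    (h₁ : readWord δ p w₁ = some q₁) (h₂ : readWord δ p w₂ = some q₂) : q₁ = q₂ := by
  have e₁ := readWord_reduce δ hinv h₁
  have e₂ := readWord_reduce δ hinv h₂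
  rw [reduce_eq_reduce_of_mk_eq hmk] at e₁
  rw [e₁] at e₂
  exact Option.some_inj.mp e₂

/-- Cyclic reduction: returns `(u, y)` with `w = u ++ y ++ invRev u`. -/
def cyc : List (A × Bool) → List (A × Bool) × List (A × Bool)
  | [] => ([], [])
  | [x] => ([], [x])
  | x :: y :: t =>
    if ((y :: t).getLast (List.cons_ne_nil y t)).1 = x.1 ∧
        ((y :: t).getLast (List.cons_ne_nil y t)).2 = !x.2 then
      (x :: (cyc ((y :: t).dropLast)).1, (cyc ((y :: t).dropLast)).2)
    else ([], x :: y :: t)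
termination_by w => w.length
decreasing_by simp [List.length_dropLast]

theorem cyc_spec (w : List (A × Bool)) :
    w = (cyc w).1 ++ (cyc w).2 ++ FreeGroup.invRev (cyc w).1 := by
  induction w using cyc.induct with
  | case1 => simp [cyc, FreeGroup.invRev]
  | case2 x => simp [cyc, FreeGroup.invRev]
  | case3 x y t hc ih =>
      rw [cyc, if_pos hc]
      obtain ⟨hc1, hc2⟩ := hc
      have hl : ((y :: t).getLast (List.cons_ne_nil y t)) = (x.1, !x.2) :=
        Prod.ext hc1 hc2
      have hd : (y :: t).dropLast ++ [(x.1, !x.2)] = y :: t := by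
        rw [← hl]; exact List.dropLast_append_getLast _
      dsimp only
      rw [invRev_cons]
      simp only [List.cons_append]
      congr 1
      rw [← List.append_assoc, ← ih, hd]
  | case4 x y t hc =>
      simp [cyc, if_neg hc, FreeGroup.invRev]

theorem cyc_junction (w : List (A × Bool)) :
    ∀ a ∈ (cyc w).2.getLast?, ∀ b ∈ (cyc w).2.head?, NC a b := by
  induction w using cyc.induct with
  | case1 => simp [cyc]
  | case2 x =>
      simp only [cyc, List.getLast?_singleton, List.head?_cons, Option.mem_def,
        Option.some_inj]
      rintro a rfl b rfl
      simp [NC]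
  | case3 x y t hc ih => rw [cyc, if_pos hc]; exact ih
  | case4 x y t hc =>
      rw [cyc, if_neg hc]
      dsimp only
      intro a ha b hb
      rw [List.getLast?_eq_getLast (List.cons_ne_nil _ _), Option.mem_def,
        Option.some_inj] at ha
      rw [List.head?_cons, Option.mem_def, Option.some_inj] at hb
      subst ha hb
      have : (x :: y :: t).getLast (List.cons_ne_nil _ _)
          = (y :: t).getLast (List.cons_ne_nil y t) := by
        rw [List.getLast_cons]
      rw [this]
      exact fun h => hc ⟨h.1, by rw [h.2]⟩

theorem chain_conj_wpow {u y : List (A × Bool)}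
    (hw : List.Chain' NC (u ++ y ++ FreeGroup.invRev u))
    (hj : ∀ a ∈ y.getLast?, ∀ b ∈ y.head?, NC a b)
    {m : ℕ} (hm : 1 ≤ m) :
    List.Chain' NC (u ++ wpow y m ++ FreeGroup.invRev u) := by
  by_cases hy : y = []
  · subst hy; simpa using hw
  · obtain ⟨n, rfl⟩ : ∃ n, m = n + 1 := ⟨m - 1, by omega⟩
    clear hm
    induction n with
    | zero => simpa using hw
    | succ n ih =>
        have known := ih
        have e : u ++ wpow y (n + 1 + 1) ++ FreeGroup.invRev u
            = (u ++ y) ++ (wpow y (n + 1) ++ FreeGroup.invRev u) := by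
          rw [wpow_succ]; simp [List.append_assoc]
        rw [e]
        apply List.isChain_append.mpr
        refine ⟨?_, ?_, ?_⟩
        · exact hw.prefix ⟨FreeGroup.invRev u, by simp [List.append_assoc]⟩
        · exact known.suffix ⟨u, by simp [List.append_assoc]⟩
        · intro a ha b hb
          rw [List.getLast?_append_of_ne_nil u hy] at ha
          rw [wpow_succ, List.append_assoc, List.head?_append_of_ne_nil y hy] at hb
          exact hj a ha b hb

theorem mem_pdom {v : List (A × Bool)} {q : Q} :
    q ∈ pdom δ v ↔ (readWord δ q v).isSome := Iff.rfl

theorem loop_sub {q : Q} {v : List (A × Bool)} {a b : ℕ} (hb : b ≤ a)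
    (ha : readWord δ q (wpow v a) = some q) (h2 : readWord δ q (wpow v b) = some q) :
    readWord δ q (wpow v (a - b)) = some q := by
  have e : wpow v a = wpow v b ++ wpow v (a - b) := by
    rw [← wpow_add]; congr 1; omega
  rw [e, readWord_append, h2, Option.bind_some] at ha
  exact ha

theorem loop_mul {q : Q} {v : List (A × Bool)} {m : ℕ}
    (h : readWord δ q (wpow v m) = some q) (t : ℕ) :
    readWord δ q (wpow v (m * t)) = some q := by
  rw [wpow_mul]; exact loop_wpow δ h t

theorem loop_gcd {q : Q} {v : List (A × Bool)} {a b : ℕ}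
    (ha : readWord δ q (wpow v a) = some q) (hb : readWord δ q (wpow v b) = some q) :
    readWord δ q (wpow v (Nat.gcd a b)) = some q := by
  induction a, b using Nat.gcd.induction with
  | H0 n => simpa using hb
  | H1 m n hm ih =>
      rw [Nat.gcd_rec]
      apply ih
      · have h2 : readWord δ q (wpow v (m * (n / m))) = some q := loop_mul δ ha _
        have h3 : m * (n / m) ≤ n := Nat.mul_div_le n m
        have h4 : n % m = n - m * (n / m) := by
          have := Nat.mod_add_div n m; omega
        rw [h4]
        exact loop_sub δ h3 hb h2
      · exact ha

variable [Fintype Q]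

theorem pdom_antitone (v : List (A × Bool)) {i j : ℕ} (hij : i ≤ j) :
    pdom δ (wpow v j) ⊆ pdom δ (wpow v i) := by
  intro q hq
  rw [mem_pdom] at hq ⊢
  have e : wpow v j = wpow v i ++ wpow v (j - i) := by rw [← wpow_add]; congr 1; omega
  rw [e, readWord_append] at hq
  cases h : readWord δ q (wpow v i) with
  | none => rw [h] at hq; simp at hq
  | some r => rfl

theorem mem_pdom_succ (v : List (A × Bool)) (m : ℕ) (q : Q) :
    q ∈ pdom δ (wpow v (m + 1)) ↔
      ∃ r, readWord δ q v = some r ∧ r ∈ pdom δ (wpow v m) := by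
  rw [mem_pdom, wpow_succ, readWord_append]
  cases h : readWord δ q v with
  | none => simp
  | some r => simp [mem_pdom]

theorem pdom_stab (v : List (A × Bool)) {J : ℕ} (hJ : Fintype.card Q + 1 ≤ J) :
    pdom δ (wpow v (J + J)) = pdom δ (wpow v J) := by
  set N := Fintype.card Q with hN
  have step : ∀ i j : ℕ, pdom δ (wpow v i) = pdom δ (wpow v j) →
      pdom δ (wpow v (i + 1)) = pdom δ (wpow v (j + 1)) := by
    intro i j h
    ext q
    rw [mem_pdom_succ, mem_pdom_succ, h]
  have exrep : ∃ i ≤ N, pdom δ (wpow v (i + 1)) = pdom δ (wpow v i) := by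
    by_contra hno
    push_neg at hno
    have key : ∀ i, i ≤ N + 1 → (pdom δ (wpow v i)).ncard + i ≤ N := by
      intro i
      induction i with
      | zero =>
          intro _
          have h1 : (pdom δ (wpow v 0)).ncard ≤ (Set.univ : Set Q).ncard :=
            Set.ncard_le_ncard (Set.subset_univ _) (Set.toFinite _)
          rw [Set.ncard_univ, Nat.card_eq_fintype_card] at h1
          omega
      | succ i ihc =>
          intro hi
          have hlt : (pdom δ (wpow v (i + 1))).ncard < (pdom δ (wpow v i)).ncard :=
            Set.ncard_lt_ncard
              (HasSubset.Subset.ssubset_of_ne (pdom_antitone δ v (by omega))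
                (hno i (by omega)))
              (Set.toFinite _)
          have := ihc (by omega)
          omega
    have := key (N + 1) le_rfl
    omega
  obtain ⟨i, hiN, hrep⟩ := exrep
  have stable : ∀ j, pdom δ (wpow v (i + j)) = pdom δ (wpow v i) := by
    intro j
    induction j with
    | zero => rfl
    | succ j ihs =>
        have := step _ _ ihs
        rw [hrep] at this
        exact this
  have h1 : pdom δ (wpow v J) = pdom δ (wpow v i) := by
    have := stable (J - i)
    rwa [show i + (J - i) = J by omega] at this
  have h2 : pdom δ (wpow v (J + J)) = pdom δ (wpow v i) := by
    have := stable (J + J - i)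
    rwa [show i + (J + J - i) = J + J by omega] at this
  rw [h1, h2]

theorem pdom_eq_pim
    (hinv : ∀ (p q : Q) (a : A) (b : Bool), δ p (a, b) = some q ↔ δ q (a, !b) = some p)
    (v : List (A × Bool)) {J : ℕ} (hJ : Fintype.card Q + 1 ≤ J) :
    pdom δ (wpow v J) = pim δ (wpow v J) := by
  have hstab := pdom_stab δ v hJ
  have hq2 : ∀ q ∈ pdom δ (wpow v J),
      ∃ r, readWord δ q (wpow v J) = some r ∧ r ∈ pdom δ (wpow v J) := by
    intro q hq
    have hq' : q ∈ pdom δ (wpow v (J + J)) := by rw [hstab]; exact hq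
    rw [mem_pdom, wpow_add, readWord_append] at hq'
    cases h : readWord δ q (wpow v J) with
    | none => rw [h] at hq'; simp at hq'
    | some r =>
        rw [h, Option.bind_some] at hq'
        exact ⟨r, rfl, hq'⟩
  ext q
  constructor
  · intro hq
    choose F hF1 hF2 using fun p : {q // q ∈ pdom δ (wpow v J)} => hq2 p.1 p.2
    let G : {q // q ∈ pdom δ (wpow v J)} → {q // q ∈ pdom δ (wpow v J)} :=
      fun p => ⟨F p, hF2 p⟩
    have Ginj : Function.Injective G := by
      intro p₁ p₂ h
      have e : F p₁ = F p₂ := congrArg Subtype.val h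
      apply Subtype.ext
      exact readWord_inj δ hinv (hF1 p₁) (e ▸ hF1 p₂)
    have Gsurj : Function.Surjective G := Finite.injective_iff_surjective.mp Ginj
    obtain ⟨p, hp⟩ := Gsurj ⟨q, hq⟩
    refine ⟨p.1, ?_⟩
    have : F p = q := congrArg Subtype.val hp
    rw [hF1 p, this]
  · rintro ⟨p, hp⟩
    have hpd : p ∈ pdom δ (wpow v J) := by rw [mem_pdom, hp]; rfl
    have hp' : p ∈ pdom δ (wpow v (J + J)) := by rw [hstab]; exact hpd
    rw [mem_pdom, wpow_add, readWord_append, hp, Option.bind_some] at hp'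
    exact hp'

end Stmt10

open Stmt10 in
/-- For the Stallings automaton `S(K) = (Q, A, δ, q₀)` of a f.g. subgroup
`K ≤ F_A` and `k ≥ 1`, the following are equivalent: (i) every group `H`-class of `M(K)`
satisfies `x^k = 1` (elements of group `H`-classes are exactly the `δ_w` with
`dom δ_w = im δ_w`, and `x^k = 1` there means `δ_{w^k}` fixes the domain pointwise);
(ii) for all `q`, `v`, `n ≥ 1`, if `v^n` labels a loop at `q` then so does `v^gcd(k,n)`;
(iii) for all `x ∈ F_A` and `n ≥ 1`, `x^n ∈ K` implies `x^gcd(k,n) ∈ K`. -/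
theorem stmt_10 {A Q : Type} [DecidableEq A] [Fintype Q]
    (K : Subgroup (FreeGroup A)) (δ : Q → A × Bool → Option Q) (q₀ : Q)
    (k : ℕ) (hk : 1 ≤ k)
    (hinv : ∀ (p q : Q) (a : A) (b : Bool), δ p (a, b) = some q ↔ δ q (a, !b) = some p)
    (hconn : ∀ q : Q, ∃ w : List (A × Bool), readWord δ q₀ w = some q)
    (hdeg : ∀ q : Q, q ≠ q₀ → 2 ≤ {x : A × Bool | (δ q x).isSome}.ncard)
    (hlink : ∀ w : List (A × Bool), FreeGroup.reduce w = w →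
      (FreeGroup.mk w ∈ K ↔ readWord δ q₀ w = some q₀)) :
    List.TFAE
      [∀ w : List (A × Bool), pdom δ w = pim δ w →
          ∀ q ∈ pdom δ w, readWord δ q (wpow w k) = some q,
       ∀ (q : Q) (v : List (A × Bool)) (n : ℕ), 1 ≤ n →
          readWord δ q (wpow v n) = some q →
          readWord δ q (wpow v (Nat.gcd k n)) = some q,
       ∀ (x : FreeGroup A) (n : ℕ), 1 ≤ n →
          x ^ n ∈ K → x ^ Nat.gcd k n ∈ K] := by
  tfae_have 1 → 2 := by
    intro h1 q v n hn hloop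
    set N := Fintype.card Q with hN
    set J := 1 + n * (N + 1) with hJdef
    have hJ : N + 1 ≤ J := by
      have : N + 1 ≤ n * (N + 1) := Nat.le_mul_of_pos_left (N + 1) (by omega)
      omega
    have hdomim := pdom_eq_pim δ hinv v hJ
    have hq : q ∈ pdom δ (wpow v J) := by
      have hl' : readWord δ q (wpow v (n * J)) = some q := loop_mul δ hloop J
      apply pdom_antitone δ v (show J ≤ n * J from Nat.le_mul_of_pos_left J (by omega))
      rw [mem_pdom, hl']; rfl
    have hJk := h1 (wpow v J) hdomim q hq
    rw [← wpow_mul] at hJk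
    have hg := loop_gcd δ hJk hloop
    have hcop : Nat.Coprime J n := by
      unfold Nat.Coprime
      rw [hJdef, Nat.gcd_add_mul_left_left, Nat.gcd_one_left]
    rwa [Nat.Coprime.gcd_mul_left_cancel k hcop] at hg
  tfae_have 2 → 1 := by
    intro h2 w hdi q hq
    have hstep : ∀ p, p ∈ pdom δ w → ∃ r, readWord δ p w = some r ∧ r ∈ pdom δ w := by
      intro p hp
      rw [mem_pdom] at hp
      cases h : readWord δ p w with
      | none => rw [h] at hp; simp at hp
      | some r =>
          refine ⟨r, rfl, ?_⟩
          rw [hdi]; exact ⟨p, h⟩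
    choose F hF1 hF2 using fun p : {q // q ∈ pdom δ w} => hstep p.1 p.2
    set G : {q // q ∈ pdom δ w} → {q // q ∈ pdom δ w} := fun p => ⟨F p, hF2 p⟩ with hG
    have hiter : ∀ (m : ℕ) (p : {q // q ∈ pdom δ w}),
        readWord δ p.1 (wpow w m) = some ((G^[m] p).1) := by
      intro m
      induction m with
      | zero => intro p; simp
      | succ m ih =>
          intro p
          rw [wpow_succ, readWord_append, hF1 p, Option.bind_some,
            Function.iterate_succ_apply]
          exact ih (G p)
    have main : ∀ a b : ℕ, a < b → G^[a] ⟨q, hq⟩ = G^[b] ⟨q, hq⟩ →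
        readWord δ q (wpow w k) = some q := by
      intro a b hab heq
      have ha := hiter a ⟨q, hq⟩
      have hb := hiter b ⟨q, hq⟩
      have e : wpow w b = wpow w (b - a) ++ wpow w a := by
        rw [← wpow_add]; congr 1; omega
      rw [e, readWord_append] at hb
      cases ht : readWord δ q (wpow w (b - a)) with
      | none => rw [ht] at hb; simp at hb
      | some t =>
          rw [ht, Option.bind_some, ← heq] at hb
          have htq : t = q := readWord_inj δ hinv hb ha
          rw [htq] at ht
          have hg := h2 q w (b - a) (by omega) ht
          obtain ⟨c, hc⟩ : Nat.gcd k (b - a) ∣ k := Nat.gcd_dvd_left _ _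
          rw [hc, wpow_mul]
          exact loop_wpow δ hg c
    obtain ⟨a, b, hab, heq⟩ :=
      Finite.exists_ne_map_eq_of_infinite (fun m : ℕ => G^[m] (⟨q, hq⟩ : {q // q ∈ pdom δ w}))
    rcases lt_or_gt_of_ne hab with h | h
    · exact main a b h heq
    · exact main b a h heq.symm
  tfae_have 2 → 3 := by
    intro h2 x n hn hxn
    set w := x.toWord with hw
    have hred : FreeGroup.reduce w = w := FreeGroup.reduce_toWord x
    have hchain : List.Chain' NC w := chain_of_reduce_eq_self hred
    set u := (cyc w).1 with hu
    set y := (cyc w).2 with hy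
    have hspec : w = u ++ y ++ FreeGroup.invRev u := cyc_spec w
    have hchain2 : List.Chain' NC (u ++ y ++ FreeGroup.invRev u) := hspec ▸ hchain
    have hj := cyc_junction w
    have hxmk : x = FreeGroup.mk u * FreeGroup.mk y * (FreeGroup.mk u)⁻¹ := by
      rw [FreeGroup.inv_mk, FreeGroup.mul_mk, FreeGroup.mul_mk, ← hspec, hw]
      exact FreeGroup.mk_toWord.symm
    have key : ∀ m, 1 ≤ m →
        (x ^ m ∈ K ↔ readWord δ q₀ (u ++ wpow y m ++ FreeGroup.invRev u) = some q₀) := by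
      intro m hm
      have hchm : List.Chain' NC (u ++ wpow y m ++ FreeGroup.invRev u) :=
        chain_conj_wpow hchain2 hj hm
      have hredm := reduce_eq_self_of_chain hchm
      have hmkm : FreeGroup.mk (u ++ wpow y m ++ FreeGroup.invRev u) = x ^ m := by
        rw [← FreeGroup.mul_mk, ← FreeGroup.mul_mk, mk_wpow, ← FreeGroup.inv_mk, hxmk,
          conj_pow]
      rw [← hmkm]
      exact hlink _ hredm
    have hread_n := (key n hn).mp hxn
    rw [readWord_append, readWord_append, Option.bind_eq_some_iff] at hread_n
    obtain ⟨p₂, hp₂, hinvu⟩ := hread_n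
    rw [Option.bind_eq_some_iff] at hp₂
    obtain ⟨p, hup, hyn⟩ := hp₂
    have hp₂p : p₂ = p := by
      have h := (readWord_invRev δ hinv u q₀ p₂).mp hinvu
      rw [h] at hup
      exact Option.some_inj.mp hup
    rw [hp₂p] at hyn hinvu
    have hgl := h2 p y n hn hyn
    have hWg : readWord δ q₀ (u ++ wpow y (Nat.gcd k n) ++ FreeGroup.invRev u) = some q₀ := by
      rw [readWord_append, readWord_append, hup, Option.bind_some, hgl, Option.bind_some]
      exact hinvu
    exact (key (Nat.gcd k n) (Nat.gcd_pos_of_pos_left n (by omega))).mpr hWg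
  tfae_have 3 → 2 := by
    intro h3 q v n hn hloop
    obtain ⟨u, hu⟩ := hconn q
    set x := FreeGroup.mk u * FreeGroup.mk v * (FreeGroup.mk u)⁻¹ with hx
    have mkW : ∀ m, FreeGroup.mk (u ++ wpow v m ++ FreeGroup.invRev u) = x ^ m := by
      intro m
      rw [← FreeGroup.mul_mk, ← FreeGroup.mul_mk, mk_wpow, ← FreeGroup.inv_mk, hx, conj_pow]
    have hWn : readWord δ q₀ (u ++ wpow v n ++ FreeGroup.invRev u) = some q₀ := by
      rw [readWord_append, readWord_append, hu, Option.bind_some, hloop, Option.bind_some]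
      exact (readWord_invRev δ hinv u q₀ q).mpr hu
    have hRn := readWord_reduce δ hinv hWn
    have hin : x ^ n ∈ K := by
      rw [← mkW n, ← FreeGroup.reduce.self (L := u ++ wpow v n ++ FreeGroup.invRev u)]
      exact (hlink _ FreeGroup.reduce.idem).mpr hRn
    have hgK : x ^ Nat.gcd k n ∈ K := h3 x n hn hin
    set g := Nat.gcd k n with hgdef
    have hR' : readWord δ q₀
        (FreeGroup.reduce (u ++ wpow v g ++ FreeGroup.invRev u)) = some q₀ := by
      apply (hlink _ FreeGroup.reduce.idem).mp
      rw [FreeGroup.reduce.self, mkW g]; exact hgK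
    have hgn : g ≤ n := Nat.le_of_dvd (by omega) (Nat.gcd_dvd_right k n)
    obtain ⟨q', hq'⟩ : ∃ q', readWord δ q (wpow v g) = some q' := by
      have e : wpow v n = wpow v g ++ wpow v (n - g) := by
        rw [← wpow_add]; congr 1; omega
      rw [e, readWord_append] at hloop
      cases h : readWord δ q (wpow v g) with
      | none => rw [h] at hloop; simp at hloop
      | some q' => exact ⟨q', rfl⟩
    have h1r : readWord δ q₀
        (FreeGroup.reduce (u ++ wpow v g ++ FreeGroup.invRev u) ++ u) = some q := by
      rw [readWord_append, hR', Option.bind_some]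
      exact hu
    have h2r : readWord δ q₀ (u ++ wpow v g) = some q' := by
      rw [readWord_append, hu, Option.bind_some]
      exact hq'
    have hmkeq : FreeGroup.mk (FreeGroup.reduce (u ++ wpow v g ++ FreeGroup.invRev u) ++ u)
        = FreeGroup.mk (u ++ wpow v g) := by
      rw [← FreeGroup.mul_mk, FreeGroup.reduce.self, mkW g, ← FreeGroup.mul_mk, mk_wpow, hx,
        conj_pow]
      group
    have hqq' : q = q' := readWord_congr δ hinv hmkeq h1r h2r
    rw [← hqq'] at hq'
    exact hq'
  tfae_finish
end

section
/- Let A' = (P', A, λ', q₀) be a finite inverse automaton with basepoint q₀, and let A = (P, A, λ, q₀) be the subautomaton obtained by deleting a vertex p' ≠ q₀ of outdegree 1 (together with its incident edge pair). Then every group H-class of the transition monoid M(A) divides (is a homomorphic image of a subgroup of) some group H-class of M(A'). -/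
/-- The partial transformation `δ_w` as an element of `Function.End (Option Q)`. -/
def ptrans {Q A : Type} (δ : Q → A × Bool → Option Q) (w : List (A × Bool)) :
    Function.End (Option Q) :=
  fun oq => oq.bind fun q => readWord δ q w

/-- The subautomaton on states `Q` obtained from an automaton on `Option Q` by deleting
the vertex `none` (transitions into `none` become undefined). -/
def delSub {Q A : Type} (δ' : Option Q → A × Bool → Option (Option Q)) :
    Q → A × Bool → Option Q :=
  fun q x => (δ' (some q) x).bind id

namespace Stmt14

variable {Q A : Type}

def winv (u : List (A × Bool)) : List (A × Bool) := (u.map fun x => (x.1, !x.2)).reverse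

theorem winv_cons (x : A × Bool) (u : List (A × Bool)) :
    winv (x :: u) = winv u ++ [(x.1, !x.2)] := by simp [winv]

section gen
variable (δ : Q → A × Bool → Option Q)

theorem readWord_nil (q : Q) : readWord δ q [] = some q := rfl

theorem readWord_cons (q : Q) (x : A × Bool) (u : List (A × Bool)) :
    readWord δ q (x :: u) = (δ q x).bind fun q' => readWord δ q' u := by
  cases h : δ q x <;> simp [readWord, h]

theorem readWord_append (u v : List (A × Bool)) (q : Q) :
    readWord δ q (u ++ v) = (readWord δ q u).bind fun q' => readWord δ q' v := by
  induction u generalizing q with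
  | nil => simp [readWord_nil]
  | cons x u ih =>
    rw [List.cons_append, readWord_cons, readWord_cons]
    cases h : δ q x <;> simp [ih]

theorem ptrans_some (u : List (A × Bool)) (q : Q) :
    ptrans δ u (some q) = readWord δ q u := rfl

theorem ptrans_none (u : List (A × Bool)) : ptrans δ u none = none := rfl

theorem ptrans_mul (u v : List (A × Bool)) :
    ptrans δ (u ++ v) = ptrans δ v * ptrans δ u := by
  funext oq
  rw [Function.End.mul_def]
  cases oq with
  | none => rfl
  | some q =>
    show ptrans δ (u ++ v) (some q) = ptrans δ v (ptrans δ u (some q))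
    rw [ptrans_some, ptrans_some, readWord_append]
    cases h : readWord δ q u <;> simp [ptrans]

theorem mem_pdom (u : List (A × Bool)) (q : Q) :
    q ∈ pdom δ u ↔ ∃ t, readWord δ q u = some t := by
  simp [pdom, Option.isSome_iff_exists]

theorem mem_pim (u : List (A × Bool)) (q : Q) :
    q ∈ pim δ u ↔ ∃ p, readWord δ p u = some q := Iff.rfl

theorem pdom_append_subset (u v : List (A × Bool)) : pdom δ (u ++ v) ⊆ pdom δ u := by
  intro q hq
  rw [mem_pdom] at hq ⊢
  obtain ⟨t, ht⟩ := hq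
  rw [readWord_append] at ht
  cases h : readWord δ q u with
  | none => rw [h] at ht; simp at ht
  | some t' => exact ⟨t', rfl⟩

theorem pim_append_subset (u v : List (A × Bool)) : pim δ (u ++ v) ⊆ pim δ v := by
  intro q hq
  obtain ⟨p, hp⟩ := hq
  rw [readWord_append] at hp
  cases h : readWord δ p u with
  | none => rw [h] at hp; simp at hp
  | some t => rw [h] at hp; exact ⟨t, hp⟩

theorem pdom_append_eq {u v : List (A × Bool)} (h : pim δ u = pdom δ v) :
    pdom δ (u ++ v) = pdom δ u := by
  apply Set.Subset.antisymm (pdom_append_subset δ u v)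
  intro q hq
  rw [mem_pdom] at hq ⊢
  obtain ⟨t, ht⟩ := hq
  have htv : t ∈ pdom δ v := h ▸ ⟨q, ht⟩
  rw [mem_pdom] at htv
  obtain ⟨t', ht'⟩ := htv
  exact ⟨t', by rw [readWord_append, ht]; exact ht'⟩

theorem pim_append_eq {u v : List (A × Bool)} (h : pim δ u = pdom δ v) :
    pim δ (u ++ v) = pim δ v := by
  apply Set.Subset.antisymm (pim_append_subset δ u v)
  intro t ht
  obtain ⟨p, hp⟩ := ht
  have hpv : p ∈ pim δ u := by
    rw [h, mem_pdom]; exact ⟨t, hp⟩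
  obtain ⟨q, hq⟩ := hpv
  exact ⟨q, by rw [readWord_append, hq]; exact hp⟩

variable (hinv : ∀ (p q : Q) (a : A) (b : Bool), δ p (a, b) = some q ↔ δ q (a, !b) = some p)
include hinv

theorem readWord_winv (u : List (A × Bool)) (s t : Q) :
    readWord δ s u = some t ↔ readWord δ t (winv u) = some s := by
  induction u generalizing s with
  | nil =>
    simp only [winv, List.map_nil, List.reverse_nil, readWord_nil, Option.some_inj]
    exact eq_comm
  | cons x u ih =>
    obtain ⟨a, b⟩ := x
    rw [winv_cons, readWord_cons, readWord_append, Option.bind_eq_some_iff]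
    dsimp only
    constructor
    · rintro ⟨s₁, hd, h⟩
      rw [(ih s₁).mp h, Option.bind_some, readWord_cons,
        (hinv s s₁ a b).mp hd]
      rfl
    · intro h₂
      cases hr : readWord δ t (winv u) with
      | none => rw [hr] at h₂; simp at h₂
      | some s₁ =>
        rw [hr, Option.bind_some, readWord_cons] at h₂
        cases hd : δ s₁ (a, !b) with
        | none => rw [hd] at h₂; simp at h₂
        | some s' =>
          rw [hd, Option.bind_some, readWord_nil, Option.some_inj] at h₂
          subst h₂
          exact ⟨s₁, (hinv _ s₁ a b).mpr hd, (ih s₁).mpr hr⟩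

theorem readWord_inj {u : List (A × Bool)} {s s' t : Q}
    (h : readWord δ s u = some t) (h' : readWord δ s' u = some t) : s = s' := by
  have h1 := (readWord_winv δ hinv u s t).mp h
  have h2 := (readWord_winv δ hinv u s' t).mp h'
  rw [h1] at h2
  exact Option.some_injective _ h2

theorem pdom_winv (u : List (A × Bool)) : pdom δ (winv u) = pim δ u := by
  ext q
  rw [mem_pdom, mem_pim]
  constructor
  · rintro ⟨t, ht⟩
    exact ⟨t, (readWord_winv δ hinv u t q).mpr ht⟩
  · rintro ⟨p, hp⟩
    exact ⟨p, (readWord_winv δ hinv u p q).mp hp⟩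

theorem pim_winv (u : List (A × Bool)) : pim δ (winv u) = pdom δ u := by
  ext q
  rw [mem_pdom, mem_pim]
  constructor
  · rintro ⟨p, hp⟩
    exact ⟨p, (readWord_winv δ hinv u q p).mpr hp⟩
  · rintro ⟨t, ht⟩
    exact ⟨t, (readWord_winv δ hinv u q t).mp ht⟩

end gen

open Classical in
noncomputable def pidE (S : Set Q) : Function.End (Option Q) :=
  fun oq => oq.bind fun q => if q ∈ S then some q else none

open Classical in
theorem pidE_some (S : Set Q) (q : Q) :
    pidE S (some q) = if q ∈ S then some q else none := rfl

section gen2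
variable (δ : Q → A × Bool → Option Q)
variable (hinv : ∀ (p q : Q) (a : A) (b : Bool), δ p (a, b) = some q ↔ δ q (a, !b) = some p)
include hinv

theorem ptrans_concat_winv (u : List (A × Bool)) :
    ptrans δ (u ++ winv u) = pidE (pdom δ u) := by
  classical
  funext oq
  cases oq with
  | none => rfl
  | some q =>
    rw [ptrans_some, readWord_append, pidE_some]
    cases h : readWord δ q u with
    | none =>
      have : q ∉ pdom δ u := by rw [mem_pdom]; simp [h]
      simp [this]
    | some t =>
      have hq : q ∈ pdom δ u := by rw [mem_pdom]; exact ⟨t, h⟩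
      simp only [Option.bind_some, if_pos hq]
      exact (readWord_winv δ hinv u q t).mp h

omit hinv

theorem pdom_of_ptrans_pid {z : List (A × Bool)} {S : Set Q}
    (h : ptrans δ z = pidE S) : pdom δ z = S := by
  classical
  ext q
  rw [mem_pdom]
  have := congrFun h (some q)
  rw [ptrans_some, pidE_some] at this
  by_cases hq : q ∈ S
  · simp only [if_pos hq] at this
    exact ⟨fun _ => hq, fun _ => ⟨q, this⟩⟩
  · simp only [if_neg hq] at this
    simp [this, hq]

theorem pim_of_ptrans_pid {z : List (A × Bool)} {S : Set Q}
    (h : ptrans δ z = pidE S) : pim δ z = S := by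
  classical
  ext q
  rw [mem_pim]
  constructor
  · rintro ⟨p, hp⟩
    have := congrFun h (some p)
    rw [ptrans_some, hp, pidE_some] at this
    by_cases hpS : p ∈ S
    · simp only [if_pos hpS] at this
      obtain rfl : q = p := Option.some_inj.mp this
      exact hpS
    · simp [if_neg hpS] at this
  · intro hq
    have := congrFun h (some q)
    rw [ptrans_some, pidE_some, if_pos hq] at this
    exact ⟨q, this⟩

include hinv

theorem idem_eq_pid {z : List (A × Bool)} {S : Set Q}
    (hd : pdom δ z = S) (hi : pim δ z = S)
    (hidem : ptrans δ z * ptrans δ z = ptrans δ z) : ptrans δ z = pidE S := by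
  classical
  funext oq
  cases oq with
  | none => rfl
  | some q =>
    rw [ptrans_some, pidE_some]
    by_cases hq : q ∈ S
    · have : q ∈ pdom δ z := hd ▸ hq
      rw [mem_pdom] at this
      obtain ⟨t, ht⟩ := this
      have h2 := congrFun hidem (some q)
      change ptrans δ z (ptrans δ z (some q)) = ptrans δ z (some q) at h2
      rw [ptrans_some, ht, ptrans_some] at h2
      obtain rfl : q = t := readWord_inj δ hinv ht h2
      rw [if_pos hq]
      exact ht
    · have : q ∉ pdom δ z := by rw [hd]; exact hq
      rw [mem_pdom] at this
      push_neg at this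
      rw [if_neg hq]
      cases hr : readWord δ q z with
      | none => rfl
      | some t => exact absurd hr (this t)

end gen2


theorem pidE_none (S : Set Q) : pidE S none = none := rfl

theorem pidE_mul (S S' : Set Q) : pidE S' * pidE S = pidE (S ∩ S') := by
  classical
  funext oq
  cases oq with
  | none => rfl
  | some q =>
    show pidE S' (pidE S (some q)) = pidE (S ∩ S') (some q)
    by_cases h1 : q ∈ S
    · by_cases h2 : q ∈ S'
      · simp [pidE_some, pidE_none, h1, h2]
      · simp [pidE_some, pidE_none, h1, h2]
    · simp [pidE_some, pidE_none, h1]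

theorem readWord_eq_none (δ : Q → A × Bool → Option Q) {u : List (A × Bool)} {S : Set Q} {q : Q}
    (h : pdom δ u = S) (hq : q ∉ S) : readWord δ q u = none := by
  cases hr : readWord δ q u with
  | none => rfl
  | some t => exact absurd (by rw [← h]; exact (mem_pdom δ u q).mpr ⟨t, hr⟩) hq

theorem mem_pdom_of (δ : Q → A × Bool → Option Q) {u : List (A × Bool)} {S : Set Q} {q : Q}
    (h : pdom δ u = S) (hq : q ∈ S) : ∃ t, readWord δ q u = some t :=
  (mem_pdom δ u q).mp (by rw [h]; exact hq)

theorem pid_sandwich (δ : Q → A × Bool → Option Q) {u : List (A × Bool)} {S : Set Q}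
    (hd : pdom δ u = S) (hi : pim δ u = S) :
    pidE S * (ptrans δ u * pidE S) = ptrans δ u := by
  classical
  funext oq
  cases oq with
  | none => rfl
  | some q =>
    show pidE S (ptrans δ u (pidE S (some q))) = ptrans δ u (some q)
    rw [pidE_some]
    by_cases hq : q ∈ S
    · rw [if_pos hq]
      obtain ⟨t, ht⟩ := mem_pdom_of δ hd hq
      have htS : t ∈ S := by rw [← hi]; exact ⟨q, ht⟩
      rw [ptrans_some δ u q, ht, pidE_some, if_pos htS]
    · rw [if_neg hq, ptrans_some δ u q, readWord_eq_none δ hd hq]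
      rfl

section del
variable (δ' : Option Q → A × Bool → Option (Option Q))

theorem delSub_eq_some (q q' : Q) (x : A × Bool) :
    delSub δ' q x = some q' ↔ δ' (some q) x = some (some q') := by
  unfold delSub
  cases h : δ' (some q) x with
  | none => simp
  | some o => cases o <;> simp

theorem hinv_delSub
    (hinv' : ∀ (p q : Option Q) (a : A) (b : Bool),
      δ' p (a, b) = some q ↔ δ' q (a, !b) = some p) :
    ∀ (p q : Q) (a : A) (b : Bool),
      delSub δ' p (a, b) = some q ↔ delSub δ' q (a, !b) = some p := by
  intro p q a b
  rw [delSub_eq_some, delSub_eq_some, hinv']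

theorem readWord_delSub_some {u : List (A × Bool)} {q q' : Q}
    (h : readWord (delSub δ') q u = some q') :
    readWord δ' (some q) u = some (some q') := by
  induction u generalizing q with
  | nil =>
    rw [readWord_nil] at h ⊢
    rw [Option.some_inj] at h
    rw [h]
  | cons x u ih =>
    rw [readWord_cons] at h ⊢
    cases hd : delSub δ' q x with
    | none => rw [hd] at h; simp at h
    | some q₁ =>
      rw [hd, Option.bind_some] at h
      rw [(delSub_eq_some δ' q q₁ x).mp hd, Option.bind_some]
      exact ih h

end del

open Classical in
noncomputable def PhiD (D : Set Q) (m : Function.End (Option (Option Q))) :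
    Function.End (Option Q) :=
  fun oq => oq.bind fun q => if q ∈ D then (m (some (some q))).bind id else none

open Classical in
theorem PhiD_some (D : Set Q) (m : Function.End (Option (Option Q))) (q : Q) :
    PhiD D m (some q) = if q ∈ D then (m (some (some q))).bind id else none := rfl

theorem PhiD_ptrans (δ' : Option Q → A × Bool → Option (Option Q)) {u : List (A × Bool)}
    {D : Set Q} (h : pdom (delSub δ') u = D) :
    PhiD D (ptrans δ' u) = ptrans (delSub δ') u := by
  classical
  funext oq
  cases oq with
  | none => rfl
  | some q =>
    rw [PhiD_some, ptrans_some (delSub δ') u q]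
    by_cases hq : q ∈ D
    · obtain ⟨q', hq'⟩ := mem_pdom_of (delSub δ') h hq
      rw [if_pos hq, ptrans_some δ' u (some q), readWord_delSub_some δ' hq', hq']
      rfl
    · rw [if_neg hq, readWord_eq_none (delSub δ') h hq]

theorem key {A Q : Type} [Fintype Q]
    (δ' : Option Q → A × Bool → Option (Option Q))
    (hinv' : ∀ (p q : Option Q) (a : A) (b : Bool),
      δ' p (a, b) = some q ↔ δ' q (a, !b) = some p)
    (w : List (A × Bool)) (hw : pdom (delSub δ') w = pim (delSub δ') w) :
    ∃ v : List (A × Bool), pdom δ' v = pim δ' v ∧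
      ∀ (G G' : Type) [Group G] [Group G']
        (f : G → Function.End (Option Q)) (f' : G' → Function.End (Option (Option Q))),
        (∀ g h : G, f (g * h) = f g * f h) → Function.Injective f →
        Set.range f = {m | ∃ u, m = ptrans (delSub δ') u ∧
          pdom (delSub δ') u = pdom (delSub δ') w ∧
          pim (delSub δ') u = pdom (delSub δ') w} →
        (∀ g h : G', f' (g * h) = f' g * f' h) → Function.Injective f' →
        Set.range f' = {m | ∃ u, m = ptrans δ' u ∧
          pdom δ' u = pdom δ' v ∧ pim δ' u = pdom δ' v} →
        ∃ (S : Subgroup G') (h : S →* G), Function.Surjective h := by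
  classical
  have hinvS := hinv_delSub δ' hinv'
  let NP : List (A × Bool) → Prop := fun u =>
    pdom (delSub δ') u = pdom (delSub δ') w ∧ pim (delSub δ') u = pdom (delSub δ') w
  have hwN : NP w := ⟨rfl, hw.symm⟩
  have hNmul : ∀ {u u'}, NP u → NP u' → NP (u ++ u') := by
    rintro u u' ⟨hd, hi⟩ ⟨hd', hi'⟩
    have him : pim (delSub δ') u = pdom (delSub δ') u' := by rw [hi, hd']
    exact ⟨by rw [pdom_append_eq _ him, hd], by rw [pim_append_eq _ him, hi']⟩
  have hNinv : ∀ {u}, NP u → NP (winv u) := by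
    rintro u ⟨hd, hi⟩
    exact ⟨by rw [pdom_winv _ hinvS, hi], by rw [pim_winv _ hinvS, hd]⟩
  obtain ⟨E₀, hE₀F, hminc⟩ :=
    Set.exists_min_image ((fun u => pdom δ' u) '' setOf NP) Set.ncard (Set.toFinite _)
      ⟨pdom δ' w, w, hwN, rfl⟩
  have hFinter : ∀ {u u'}, NP u → NP u' →
      ∃ z, NP z ∧ pdom δ' z = pdom δ' u ∩ pdom δ' u' := by
    intro u u' hu hu'
    refine ⟨(u ++ winv u) ++ (u' ++ winv u'),
      hNmul (hNmul hu (hNinv hu)) (hNmul hu' (hNinv hu')), ?_⟩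
    apply pdom_of_ptrans_pid
    rw [ptrans_mul, ptrans_concat_winv δ' hinv' u, ptrans_concat_winv δ' hinv' u', pidE_mul]
  have hE₀le : ∀ {u}, NP u → E₀ ⊆ pdom δ' u := by
    intro u hu
    obtain ⟨u₀, hu₀N, hu₀⟩ := hE₀F
    have hu₀' : pdom δ' u₀ = E₀ := hu₀
    obtain ⟨z, hzN, hz⟩ := hFinter hu₀N hu
    rw [hu₀'] at hz
    have hle : E₀.ncard ≤ (pdom δ' z).ncard := hminc _ ⟨z, hzN, rfl⟩
    have hEq : pdom δ' z = E₀ :=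
      Set.eq_of_subset_of_ncard_le (by rw [hz]; exact Set.inter_subset_left) hle
        (Set.toFinite _)
    rw [← hEq, hz]
    exact Set.inter_subset_right
  obtain ⟨u₁, hu₁N, hu₁E'⟩ := hE₀F
  have hu₁E : pdom δ' u₁ = E₀ := hu₁E'
  have hvN : NP (u₁ ++ winv u₁) := hNmul hu₁N (hNinv hu₁N)
  have hvpid : ptrans δ' (u₁ ++ winv u₁) = pidE E₀ := by
    rw [ptrans_concat_winv δ' hinv' u₁, hu₁E]
  have hvdom : pdom δ' (u₁ ++ winv u₁) = E₀ := pdom_of_ptrans_pid δ' hvpid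
  have hvim : pim δ' (u₁ ++ winv u₁) = E₀ := pim_of_ptrans_pid δ' hvpid
  have hvpidS : ptrans (delSub δ') (u₁ ++ winv u₁) = pidE (pdom (delSub δ') w) := by
    rw [ptrans_concat_winv (delSub δ') hinvS u₁, hu₁N.1]
  refine ⟨u₁ ++ winv u₁, by rw [hvdom, hvim], ?_⟩
  intro G G' _ _ f f' hf hfi hfr hf' hfi' hfr'
  have hfr1 : ∀ u, NP u → ptrans (delSub δ') u ∈ Set.range f := by
    intro u hu
    rw [hfr]
    exact ⟨u, rfl, hu.1, hu.2⟩
  have hfr1' : ∀ g : G, ∃ u, NP u ∧ f g = ptrans (delSub δ') u := by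
    intro g
    have hmem : f g ∈ Set.range f := ⟨g, rfl⟩
    rw [hfr] at hmem
    obtain ⟨u, h1, h2, h3⟩ := hmem
    exact ⟨u, ⟨h2, h3⟩, h1⟩
  have hfr2' : ∀ g' : G', ∃ u, f' g' = ptrans δ' u ∧ pdom δ' u = E₀ ∧ pim δ' u = E₀ := by
    intro g'
    have hmem : f' g' ∈ Set.range f' := ⟨g', rfl⟩
    rw [hfr'] at hmem
    obtain ⟨u, h1, h2, h3⟩ := hmem
    exact ⟨u, h1, by rw [h2, hvdom], by rw [h3, hvdom]⟩
  have h1idem : f' 1 * f' 1 = f' 1 := by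
    have h := hf' 1 1
    rw [one_mul] at h
    exact h.symm
  have hf'1 : f' 1 = pidE E₀ := by
    obtain ⟨z, hz1, hz2, hz3⟩ := hfr2' 1
    rw [hz1] at h1idem ⊢
    exact idem_eq_pid δ' hinv' hz2 hz3 h1idem
  let Sgrp : Subgroup G' :=
    { carrier := {g' | ∃ u, NP u ∧ pdom δ' u = E₀ ∧ pim δ' u = E₀ ∧ f' g' = ptrans δ' u}
      one_mem' := ⟨u₁ ++ winv u₁, hvN, hvdom, hvim, by rw [hf'1, hvpid]⟩
      mul_mem' := by
        rintro a b ⟨ua, hNa, hda, hia, hfa⟩ ⟨ub, hNb, hdb, hib, hfb⟩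
        refine ⟨ub ++ ua, hNmul hNb hNa, ?_, ?_, ?_⟩
        · rw [pdom_append_eq δ' (by rw [hib, hda]), hdb]
        · rw [pim_append_eq δ' (by rw [hib, hda]), hia]
        · rw [hf' a b, hfa, hfb, ← ptrans_mul]
      inv_mem' := by
        rintro a ⟨ua, hNa, hda, hia, hfa⟩
        refine ⟨winv ua, hNinv hNa, by rw [pdom_winv δ' hinv', hia],
          by rw [pim_winv δ' hinv', hda], ?_⟩
        obtain ⟨z, hz1, hz2, hz3⟩ := hfr2' a⁻¹
        rw [hz1]
        have hcomp : ptrans δ' z * ptrans δ' ua = pidE E₀ := by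
          rw [← hz1, ← hfa, ← hf', inv_mul_cancel, hf'1]
        funext oq
        cases oq with
        | none => rfl
        | some s =>
          rw [ptrans_some δ' z s, ptrans_some δ' (winv ua) s]
          by_cases hs : s ∈ E₀
          · have hsim : s ∈ pim δ' ua := by rw [hia]; exact hs
            obtain ⟨t, ht⟩ := hsim
            have htE : t ∈ E₀ := by rw [← hda]; exact (mem_pdom δ' ua t).mpr ⟨s, ht⟩
            have hc : ptrans δ' z (readWord δ' t ua) = pidE E₀ (some t) :=
              congrFun hcomp (some t)
            rw [ht, ptrans_some δ' z s, pidE_some, if_pos htE] at hc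
            rw [hc]
            exact ((readWord_winv δ' hinv' ua t s).mp ht).symm
          · rw [readWord_eq_none δ' hz2 hs,
              readWord_eq_none δ' (by rw [pdom_winv δ' hinv', hia] : pdom δ' (winv ua) = E₀) hs] }
  let ψ : Sgrp → G := fun s => Function.invFun f (PhiD (pdom (delSub δ') w) (f' (s : G')))
  have hψ : ∀ (s : Sgrp) (u : List (A × Bool)), NP u → f' (s : G') = ptrans δ' u →
      f (ψ s) = ptrans (delSub δ') u := by
    intro s u hu hfu
    have hPhi : PhiD (pdom (delSub δ') w) (f' (s : G')) = ptrans (delSub δ') u := by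
      rw [hfu]
      exact PhiD_ptrans δ' hu.1
    show f (Function.invFun f (PhiD (pdom (delSub δ') w) (f' (s : G')))) = _
    rw [hPhi]
    exact Function.invFun_eq (hfr1 u hu)
  have hψmul : ∀ s t : Sgrp, ψ (s * t) = ψ s * ψ t := by
    intro s t
    obtain ⟨us, hNs, hds, his, hfs⟩ := s.2
    obtain ⟨ut, hNt, hdt, hit, hft⟩ := t.2
    apply hfi
    have hst : f' ((↑(s * t)) : G') = ptrans δ' (ut ++ us) := by
      rw [Subgroup.coe_mul, hf', hfs, hft, ← ptrans_mul]
    rw [hψ (s * t) (ut ++ us) (hNmul hNt hNs) hst, hf,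
        hψ s us hNs hfs, hψ t ut hNt hft]
    exact ptrans_mul (delSub δ') ut us
  refine ⟨Sgrp, MonoidHom.mk' ψ hψmul, ?_⟩
  intro g
  obtain ⟨u, hNu, hfg⟩ := hfr1' g
  have hNz : NP ((u₁ ++ winv u₁) ++ u ++ (u₁ ++ winv u₁)) :=
    hNmul (hNmul hvN hNu) hvN
  have hdz : pdom δ' ((u₁ ++ winv u₁) ++ u ++ (u₁ ++ winv u₁)) = E₀ := by
    apply Set.Subset.antisymm
    · intro q hq
      have h1 := pdom_append_subset δ' ((u₁ ++ winv u₁) ++ u) (u₁ ++ winv u₁) hq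
      have h2 := pdom_append_subset δ' (u₁ ++ winv u₁) u h1
      rwa [hvdom] at h2
    · exact hE₀le hNz
  have hiz : pim δ' ((u₁ ++ winv u₁) ++ u ++ (u₁ ++ winv u₁)) = E₀ := by
    apply Set.Subset.antisymm
    · intro q hq
      have h1 := pim_append_subset δ' ((u₁ ++ winv u₁) ++ u) (u₁ ++ winv u₁) hq
      rwa [hvim] at h1
    · have h2 := hE₀le (hNinv hNz)
      rwa [pdom_winv δ' hinv'] at h2
  have hmem : ptrans δ' ((u₁ ++ winv u₁) ++ u ++ (u₁ ++ winv u₁)) ∈ Set.range f' := by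
    rw [hfr']
    exact ⟨(u₁ ++ winv u₁) ++ u ++ (u₁ ++ winv u₁), rfl, by rw [hdz, hvdom],
      by rw [hiz, hvdom]⟩
  obtain ⟨g', hg'⟩ := hmem
  have hg'S : g' ∈ Sgrp := ⟨(u₁ ++ winv u₁) ++ u ++ (u₁ ++ winv u₁), hNz, hdz, hiz, hg'⟩
  refine ⟨⟨g', hg'S⟩, ?_⟩
  show ψ ⟨g', hg'S⟩ = g
  apply hfi
  rw [hψ ⟨g', hg'S⟩ _ hNz hg', hfg]
  rw [ptrans_mul (delSub δ') ((u₁ ++ winv u₁) ++ u) (u₁ ++ winv u₁),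
      ptrans_mul (delSub δ') (u₁ ++ winv u₁) u, hvpidS]
  exact pid_sandwich (delSub δ') hNu.1 hNu.2

end Stmt14

/-- Let `A' = (Option Q, A, δ', some q₀)` be a finite inverse automaton
with basepoint `some q₀`, and delete the vertex `none ≠ basepoint`, which has
outdegree 1, obtaining the subautomaton `A = (Q, A, delSub δ', q₀)`. Then every group
`H`-class of `M(A)` divides (is a homomorphic image of a subgroup of) some group
`H`-class of `M(A')`. Group `H`-classes are represented by abstract groups mapping
multiplicatively and injectively onto them. -/
theorem stmt_14 {A Q : Type} [Fintype Q]
    (δ' : Option Q → A × Bool → Option (Option Q)) (q₀ : Q)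
    (hinv' : ∀ (p q : Option Q) (a : A) (b : Bool),
      δ' p (a, b) = some q ↔ δ' q (a, !b) = some p)
    (htrim' : ∀ p : Option Q, ∃ w : List (A × Bool), readWord δ' (some q₀) w = some p)
    (hdeg1 : {x : A × Bool | (δ' none x).isSome}.ncard = 1) :
    ∀ w : List (A × Bool), pdom (delSub δ') w = pim (delSub δ') w →
      ∃ v : List (A × Bool), pdom δ' v = pim δ' v ∧
        ∀ (G G' : Type) [Group G] [Group G']
          (f : G → Function.End (Option Q)) (f' : G' → Function.End (Option (Option Q))),
          (∀ g h : G, f (g * h) = f g * f h) → Function.Injective f →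
          Set.range f = {m | ∃ u, m = ptrans (delSub δ') u ∧
            pdom (delSub δ') u = pdom (delSub δ') w ∧
            pim (delSub δ') u = pdom (delSub δ') w} →
          (∀ g h : G', f' (g * h) = f' g * f' h) → Function.Injective f' →
          Set.range f' = {m | ∃ u, m = ptrans δ' u ∧
            pdom δ' u = pdom δ' v ∧ pim δ' u = pdom δ' v} →
          ∃ (S : Subgroup G') (h : S →* G), Function.Surjective h := by
  intro w hw
  exact Stmt14.key δ' hinv' w hw
end
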